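/- There exists a unique ℂ-algebra homomorphism F from the Weyl algebra A_N to itself satisfying F(X_i) = −D_i and F(D_i) = X_i for all i = 1,…,N, and this F is bijective, i.e., F is a ℂ-algebra automorphism of A_N. (This automorphism realizes the Fourier transform of algebraic D-modules on ℂ^N, which endows any left A_N-module with a new left A_N-module structure.) -/

import Mathlib

open MvPolynomial

/-- The operator of multiplication by the `i`-th variable on the polynomial ring
`ℂ[x_1, …, x_N]`. -/
noncomputable def Xop (N : ℕ) (i : Fin N) :
    Module.End ℂ (MvPolynomial (Fin N) ℂ) :=
  LinearMap.mulLeft ℂ (X i)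

/-- The `i`-th formal partial derivative on the polynomial ring `ℂ[x_1, …, x_N]`. -/
noncomputable def Dop (N : ℕ) (i : Fin N) :
    Module.End ℂ (MvPolynomial (Fin N) ℂ) :=
  (pderiv i).toLinearMap

/-- The Weyl algebra `A_N`: the ℂ-subalgebra of `End ℂ (ℂ[x_1, …, x_N])` generated by the
multiplication operators `X_1, …, X_N` and the partial derivatives `D_1, …, D_N`. -/
noncomputable def Weyl (N : ℕ) :
    Subalgebra ℂ (Module.End ℂ (MvPolynomial (Fin N) ℂ)) :=
  Algebra.adjoin ℂ (Set.range (Xop N) ∪ Set.range (Dop N))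

/-- `X_i` as an element of the Weyl algebra. -/
noncomputable def XW (N : ℕ) (i : Fin N) : Weyl N :=
  ⟨Xop N i, Algebra.subset_adjoin (Set.mem_union_left _ ⟨i, rfl⟩)⟩

/-- `D_i` as an element of the Weyl algebra. -/
noncomputable def DW (N : ℕ) (i : Fin N) : Weyl N :=
  ⟨Dop N i, Algebra.subset_adjoin (Set.mem_union_right _ ⟨i, rfl⟩)⟩

set_option linter.dupNamespace false
set_option synthInstance.maxHeartbeats 1000000
set_option maxHeartbeats 1000000

namespace FourierAux

variable {N : ℕ}

lemma sub_single_add (a : Fin N →₀ ℕ) (i : Fin N) (hne : a i ≠ 0) :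
    a - Finsupp.single i 1 + Finsupp.single i 1 = a := by
  ext j
  rcases eq_or_ne j i with rfl | hj
  · simp [Nat.sub_add_cancel (Nat.one_le_iff_ne_zero.mpr hne)]
  · simp [Finsupp.single_apply, Ne.symm hj, hj]

/-- coefficient of a partial derivative -/
lemma coeff_pderiv (i : Fin N) (m : Fin N →₀ ℕ) (q : MvPolynomial (Fin N) ℂ) :
    coeff m (pderiv i q) = (m i + 1) * coeff (m + Finsupp.single i 1) q := by
  induction q using MvPolynomial.induction_on' with
  | monomial s a =>
    rw [pderiv_monomial, coeff_monomial, coeff_monomial]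
    by_cases h : s = m + Finsupp.single i 1
    · subst h
      have h1 : m + Finsupp.single i 1 - Finsupp.single i 1 = m := by
        ext j
        rcases eq_or_ne j i with rfl | hj
        · simp
        · simp [Finsupp.single_apply, Ne.symm hj, hj]
      have h2 : ((m + Finsupp.single i 1 : Fin N →₀ ℕ)) i = m i + 1 := by simp
      rw [if_pos h1, h2, if_pos rfl]
      push_cast
      ring
    · rw [if_neg h]
      by_cases h2 : s - Finsupp.single i 1 = m
      · rw [if_pos h2]
        have hsi : s i = 0 := by
          by_contra hne
          exact h (by rw [← h2, sub_single_add s i hne])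
        simp [hsi]
      · rw [if_neg h2, mul_zero]
  | add p q hp hq =>
    simp only [map_add, coeff_add, hp, hq]; ring

/-- multivariate factorial -/
def fact (a : Fin N →₀ ℕ) : ℕ := ∏ j : Fin N, Nat.factorial (a j)

lemma fact_add_single (a : Fin N →₀ ℕ) (i : Fin N) :
    fact (a + Finsupp.single i 1) = fact a * (a i + 1) := by
  unfold fact
  rw [← Finset.mul_prod_erase Finset.univ _ (Finset.mem_univ i),
    ← Finset.mul_prod_erase Finset.univ (fun j => Nat.factorial (a j)) (Finset.mem_univ i)]
  have h1 : Nat.factorial (((a + Finsupp.single i 1 : Fin N →₀ ℕ)) i)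
      = Nat.factorial (a i) * (a i + 1) := by
    simp [Nat.factorial_succ]; ring
  have h2 : ∀ j ∈ Finset.univ.erase i,
      Nat.factorial (((a + Finsupp.single i 1 : Fin N →₀ ℕ)) j) = Nat.factorial (a j) := by
    intro j hj
    have : j ≠ i := (Finset.mem_erase.mp hj).1
    simp [Finsupp.single_apply, Ne.symm this]
  rw [h1, Finset.prod_congr rfl h2]
  ring

lemma fact_ne_zero (a : Fin N →₀ ℕ) : (fact a : ℂ) ≠ 0 := by
  have : fact a ≠ 0 := Finset.prod_ne_zero_iff.mpr fun j _ => (Nat.factorial_pos _).ne'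
  exact Nat.cast_ne_zero.mpr this

/-- the weighted pairing `B (x^a) (x^b) = a! δ_{ab}` -/
noncomputable def B :
    MvPolynomial (Fin N) ℂ →ₗ[ℂ] MvPolynomial (Fin N) ℂ →ₗ[ℂ] ℂ :=
  (basisMonomials (Fin N) ℂ).constr ℂ (fun a => (fact a : ℂ) • lcoeff ℂ a)

lemma B_monomial_left (a : Fin N →₀ ℕ) (c : ℂ) (q : MvPolynomial (Fin N) ℂ) :
    B (monomial a c) q = c * ((fact a : ℂ) * coeff a q) := by
  have h : (monomial a c : MvPolynomial (Fin N) ℂ) = c • monomial a 1 := by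
    rw [smul_monomial, smul_eq_mul, mul_one]
  have h2 : (B (N := N)) (monomial a 1) = (fact a : ℂ) • lcoeff ℂ a := by
    have := (basisMonomials (Fin N) ℂ).constr_basis ℂ
      (fun a => ((fact a : ℂ) • lcoeff ℂ a : MvPolynomial (Fin N) ℂ →ₗ[ℂ] ℂ)) a
    rwa [show (basisMonomials (Fin N) ℂ) a = monomial a 1 from
      congrFun (coe_basisMonomials (Fin N) ℂ) a] at this
  rw [h, map_smul]
  simp [h2, lcoeff_apply, mul_assoc]



lemma B_X_left (i : Fin N) (p q : MvPolynomial (Fin N) ℂ) :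
    B (X i * p) q = B p (pderiv i q) := by
  induction p using MvPolynomial.induction_on' with
  | monomial s a =>
    have h : (X i : MvPolynomial (Fin N) ℂ) * monomial s a
        = monomial (s + Finsupp.single i 1) a := by
      rw [X, monomial_mul, one_mul, add_comm]
    rw [h, B_monomial_left, B_monomial_left, coeff_pderiv, fact_add_single]
    push_cast
    ring
  | add p1 p2 h1 h2 =>
    simp only [mul_add, map_add, LinearMap.add_apply, h1, h2]

lemma B_D_left (i : Fin N) (p q : MvPolynomial (Fin N) ℂ) :
    B (pderiv i p) q = B p (X i * q) := by
  classical
  induction p using MvPolynomial.induction_on' with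
  | monomial s a =>
    rw [pderiv_monomial, B_monomial_left, B_monomial_left, coeff_X_mul']
    by_cases hs : s i = 0
    · have : i ∉ s.support := by simp [hs]
      rw [if_neg this]
      simp [hs]
    · have : i ∈ s.support := by simp [hs]
      rw [if_pos this]
      have key : (fact s : ℂ) = (fact (s - Finsupp.single i 1) : ℂ) * (s i : ℂ) := by
        have h1 := fact_add_single (s - Finsupp.single i 1) i
        rw [sub_single_add s i hs] at h1
        have h2 : ((s - Finsupp.single i 1 : Fin N →₀ ℕ)) i + 1 = s i := by
          simp [Nat.sub_add_cancel (Nat.one_le_iff_ne_zero.mpr hs)]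
        rw [h2] at h1
        exact_mod_cast congrArg (Nat.cast : ℕ → ℂ) h1
      rw [key]
      push_cast
      ring
  | add p1 p2 h1 h2 =>
    simp only [map_add, LinearMap.add_apply, h1, h2]

/-- uniqueness from nondegeneracy against monomials -/
lemma eq_of_B_eq {T1 T2 : Module.End ℂ (MvPolynomial (Fin N) ℂ)}
    (h : ∀ p q, B p (T1 q) = B p (T2 q)) : T1 = T2 := by
  apply LinearMap.ext
  intro q
  apply MvPolynomial.ext
  intro m
  have h1 := h (monomial m 1) q
  rw [B_monomial_left, B_monomial_left, one_mul, one_mul] at h1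
  exact mul_left_cancel₀ (fact_ne_zero m) h1

lemma exists_adjoint : ∀ T ∈ Weyl N, ∃ T', T' ∈ Weyl N ∧
    ∀ p q, B (T p) q = B p (T' q) := by
  intro T hT
  induction hT using Algebra.adjoin_induction with
  | mem x hx =>
    rcases hx with ⟨i, rfl⟩ | ⟨i, rfl⟩
    · exact ⟨Dop N i, (DW N i).2, fun p q => by
        simpa [Xop, Dop, LinearMap.mulLeft_apply] using B_X_left i p q⟩
    · exact ⟨Xop N i, (XW N i).2, fun p q => by
        simpa [Xop, Dop, LinearMap.mulLeft_apply] using B_D_left i p q⟩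
  | algebraMap r =>
    exact ⟨algebraMap ℂ _ r, Subalgebra.algebraMap_mem _ r, fun p q => by
      simp [Module.algebraMap_end_apply]⟩
  | add x y hx hy ihx ihy =>
    obtain ⟨x', hx', hxs⟩ := ihx
    obtain ⟨y', hy', hys⟩ := ihy
    exact ⟨x' + y', add_mem hx' hy', fun p q => by
      simp [LinearMap.add_apply, hxs, hys]⟩
  | mul x y hx hy ihx ihy =>
    obtain ⟨x', hx', hxs⟩ := ihx
    obtain ⟨y', hy', hys⟩ := ihy
    exact ⟨y' * x', mul_mem hy' hx', fun p q => by
      rw [Module.End.mul_apply, Module.End.mul_apply, hxs (y p) q, hys p (x' q)]⟩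

noncomputable def adjW (T : Weyl N) : Weyl N :=
  ⟨(exists_adjoint T.1 T.2).choose, (exists_adjoint T.1 T.2).choose_spec.1⟩

lemma adj_spec (T : Weyl N) (p q : MvPolynomial (Fin N) ℂ) :
    B (T.1 p) q = B p ((adjW T).1 q) :=
  (exists_adjoint T.1 T.2).choose_spec.2 p q

lemma adj_eq_of (T : Weyl N) (S : Weyl N)
    (h : ∀ p q, B (T.1 p) q = B p (S.1 q)) : adjW T = S := by
  apply Subtype.ext
  apply eq_of_B_eq (T1 := (adjW T).1) (T2 := S.1)
  intro p q
  rw [← adj_spec, h]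

lemma adj_add (S T : Weyl N) : adjW (S + T) = adjW S + adjW T := by
  apply adj_eq_of
  intro p q
  have h0 : (S + T).1 p = S.1 p + T.1 p := rfl
  have h1 : ((adjW S + adjW T : Weyl N)).1 q = (adjW S).1 q + (adjW T).1 q := rfl
  rw [h0, map_add, LinearMap.add_apply, adj_spec, adj_spec, h1, map_add]

lemma adj_smul (c : ℂ) (T : Weyl N) : adjW (c • T) = c • adjW T := by
  apply adj_eq_of
  intro p q
  have h1 : (c • T).1 p = c • (T.1 p) := rfl
  have h2 : ((c • adjW T : Weyl N)).1 q = c • ((adjW T).1 q) := rfl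
  rw [h1, map_smul, LinearMap.smul_apply, adj_spec, h2, map_smul]

lemma adj_mul (S T : Weyl N) : adjW (S * T) = adjW T * adjW S := by
  apply adj_eq_of
  intro p q
  have h1 : (S * T).1 p = S.1 (T.1 p) := rfl
  have h2 : ((adjW T * adjW S : Weyl N)).1 q = (adjW T).1 ((adjW S).1 q) := rfl
  rw [h1, adj_spec, adj_spec, h2]

lemma adj_one : adjW (1 : Weyl N) = 1 := by
  apply adj_eq_of
  intro p q
  rfl

lemma adj_XW (i : Fin N) : adjW (XW N i) = DW N i := by
  apply adj_eq_of
  intro p q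
  simpa [XW, DW, Xop, Dop, LinearMap.mulLeft_apply] using B_X_left i p q

lemma adj_DW (i : Fin N) : adjW (DW N i) = XW N i := by
  apply adj_eq_of
  intro p q
  simpa [XW, DW, Xop, Dop, LinearMap.mulLeft_apply] using B_D_left i p q

lemma adj_neg (T : Weyl N) : adjW (-T) = - adjW T := by
  have h := adj_smul (-1 : ℂ) T
  rwa [neg_one_smul ℂ T, neg_one_smul ℂ (adjW T)] at h

-- SECTION 3 (appended to full.lean, inside namespace FourierAux)
lemma totalDegree_le_of {q : MvPolynomial (Fin N) ℂ} {d : ℕ}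
    (h : ∀ m ∈ q.support, (m.sum fun _ e => e) ≤ d) : totalDegree q ≤ d :=
  Finset.sup_le h

lemma sum_add_single (m : Fin N →₀ ℕ) (i : Fin N) :
    ((m + Finsupp.single i 1 : Fin N →₀ ℕ)).sum (fun _ e => e)
      = (m.sum fun _ e => e) + 1 := by
  rw [Finsupp.sum_add_index' (fun _ => rfl) (fun _ _ _ => rfl)]
  simp

lemma deg_pderiv {q : MvPolynomial (Fin N) ℂ} {d : ℕ} (i : Fin N)
    (h : totalDegree q ≤ d + 1) : totalDegree (pderiv i q) ≤ d := by
  apply totalDegree_le_of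
  intro m hm
  have hc : coeff m (pderiv i q) ≠ 0 := mem_support_iff.mp hm
  rw [coeff_pderiv] at hc
  have hc2 : coeff (m + Finsupp.single i 1) q ≠ 0 := right_ne_zero_of_mul hc
  have := le_totalDegree (mem_support_iff.mpr hc2)
  rw [sum_add_single] at this
  omega

lemma pderiv_eq_zero_of_deg_zero {q : MvPolynomial (Fin N) ℂ} (i : Fin N)
    (h : totalDegree q ≤ 0) : pderiv i q = 0 := by
  apply MvPolynomial.ext
  intro m
  rw [coeff_pderiv, coeff_zero]
  have hz : coeff (m + Finsupp.single i 1) q = 0 := by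
    by_contra hc
    have := le_totalDegree (mem_support_iff.mpr hc)
    rw [sum_add_single] at this
    omega
  rw [hz, mul_zero]

/-- the Laplacian-type operator `E = ∑ D_i ^ 2` -/
noncomputable def Eop (N : ℕ) : Module.End ℂ (MvPolynomial (Fin N) ℂ) :=
  ∑ j : Fin N, Dop N j * Dop N j

lemma Eop_apply (p : MvPolynomial (Fin N) ℂ) :
    Eop N p = ∑ j : Fin N, pderiv j (pderiv j p) := by
  rw [Eop, LinearMap.sum_apply]
  rfl

lemma Eop_mem : Eop N ∈ Weyl N :=
  Subalgebra.sum_mem _ fun j _ => mul_mem (DW N j).2 (DW N j).2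

lemma deg_E {q : MvPolynomial (Fin N) ℂ} {d : ℕ}
    (h : totalDegree q ≤ d + 1) : totalDegree (Eop N q) ≤ d := by
  rw [Eop_apply]
  apply totalDegree_finsetSum_le
  intro j _
  exact deg_pderiv j ((deg_pderiv j h).trans (Nat.le_succ d))

lemma deg_E_weak {q : MvPolynomial (Fin N) ℂ} {d : ℕ}
    (h : totalDegree q ≤ d) : totalDegree (Eop N q) ≤ d :=
  deg_E (h.trans (Nat.le_succ d))

lemma E_eq_zero_of_deg_zero {q : MvPolynomial (Fin N) ℂ}
    (h : totalDegree q ≤ 0) : Eop N q = 0 := by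
  rw [Eop_apply]
  apply Finset.sum_eq_zero
  intro j _
  rw [pderiv_eq_zero_of_deg_zero j h, map_zero]

lemma deg_E_pow {q : MvPolynomial (Fin N) ℂ} {d : ℕ} (k : ℕ)
    (h : totalDegree q ≤ d) : totalDegree ((Eop N ^ k) q) ≤ d := by
  induction k with
  | zero => simpa using h
  | succ k ih =>
    rw [pow_succ', Module.End.mul_apply]
    exact deg_E_weak (by
      -- need deg (E^k q) ≤ d; careful: pow_succ' : a^(k+1) = a * a^k
      exact ih)

lemma E_pow_eq_zero {q : MvPolynomial (Fin N) ℂ} {k : ℕ}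
    (h : totalDegree q < k) : (Eop N ^ k) q = 0 := by
  induction k generalizing q with
  | zero => omega
  | succ k ih =>
    rw [pow_succ, Module.End.mul_apply]
    rcases Nat.eq_zero_or_pos k with rfl | hk
    · rw [E_eq_zero_of_deg_zero (by omega), pow_zero]
      rfl
    · exact ih (by
        have : totalDegree q ≤ k := by omega
        have h2 : totalDegree (Eop N q) ≤ k - 1 := deg_E (by omega)
        omega)

/-- partial exponential sums of `exp (c E)` -/
noncomputable def PE (N : ℕ) (c : ℂ) (n : ℕ) : Module.End ℂ (MvPolynomial (Fin N) ℂ) :=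
  ∑ k ∈ Finset.range n, (c ^ k * ((Nat.factorial k : ℂ))⁻¹) • (Eop N) ^ k

lemma PE_apply (c : ℂ) (n : ℕ) (p : MvPolynomial (Fin N) ℂ) :
    PE N c n p = ∑ k ∈ Finset.range n,
      (c ^ k * ((Nat.factorial k : ℂ))⁻¹) • ((Eop N ^ k) p) := by
  rw [PE, LinearMap.sum_apply]
  rfl

lemma PE_stable (c : ℂ) {p : MvPolynomial (Fin N) ℂ} {n m : ℕ}
    (hn : totalDegree p < n) (hnm : n ≤ m) : PE N c m p = PE N c n p := by
  rw [PE_apply, PE_apply]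
  apply (Finset.sum_subset (Finset.range_subset_range.mpr hnm) ?_).symm
  intro k _ hk
  rw [Finset.mem_range, not_lt] at hk
  rw [E_pow_eq_zero (lt_of_lt_of_le hn hk), smul_zero]

lemma deg_PE (c : ℂ) (n : ℕ) {p : MvPolynomial (Fin N) ℂ} {d : ℕ}
    (h : totalDegree p ≤ d) : totalDegree (PE N c n p) ≤ d := by
  rw [PE_apply]
  apply totalDegree_finsetSum_le
  intro k _
  exact (totalDegree_smul_le _ _).trans (deg_E_pow k h)

/-- the operator `exp (c E)` -/
noncomputable def Uop (N : ℕ) (c : ℂ) : Module.End ℂ (MvPolynomial (Fin N) ℂ) where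
  toFun p := PE N c (p.totalDegree + 1) p
  map_add' p q := by
    show PE N c ((p + q).totalDegree + 1) (p + q)
      = PE N c (p.totalDegree + 1) p + PE N c (q.totalDegree + 1) q
    set M := max p.totalDegree q.totalDegree + 1 with hM
    have h1 : PE N c ((p + q).totalDegree + 1) (p + q) = PE N c M (p + q) :=
      (PE_stable c (Nat.lt_succ_self _) (Nat.succ_le_succ (totalDegree_add p q))).symm
    have h2 : PE N c (p.totalDegree + 1) p = PE N c M p :=
      (PE_stable c (Nat.lt_succ_self _) (Nat.succ_le_succ (le_max_left _ _))).symm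
    have h3 : PE N c (q.totalDegree + 1) q = PE N c M q :=
      (PE_stable c (Nat.lt_succ_self _) (Nat.succ_le_succ (le_max_right _ _))).symm
    rw [h1, h2, h3, map_add]
  map_smul' a p := by
    show PE N c ((a • p).totalDegree + 1) (a • p) = a • PE N c (p.totalDegree + 1) p
    rw [← PE_stable c (Nat.lt_succ_self ((a • p).totalDegree))
      (Nat.succ_le_succ (totalDegree_smul_le a p)), map_smul]

lemma Uop_eq_PE (c : ℂ) {p : MvPolynomial (Fin N) ℂ} {n : ℕ}
    (h : totalDegree p < n) : Uop N c p = PE N c n p := by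
  show PE N c (p.totalDegree + 1) p = PE N c n p
  exact (PE_stable c (Nat.lt_succ_self _) h).symm

lemma pderiv_comm' (i j : Fin N) (q : MvPolynomial (Fin N) ℂ) :
    pderiv i (pderiv j q) = pderiv j (pderiv i q) := by
  apply MvPolynomial.ext
  intro m
  rw [coeff_pderiv, coeff_pderiv, coeff_pderiv, coeff_pderiv]
  rcases eq_or_ne i j with rfl | hij
  · ring
  · have h1 : ((m + Finsupp.single i 1 : Fin N →₀ ℕ)) j = m j := by
      simp [Finsupp.single_apply, hij]
    have h2 : ((m + Finsupp.single j 1 : Fin N →₀ ℕ)) i = m i := by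
      simp [Finsupp.single_apply, Ne.symm hij]
    rw [h1, h2, add_right_comm]
    ring

lemma E_pderiv_comm (i : Fin N) (q : MvPolynomial (Fin N) ℂ) :
    Eop N (pderiv i q) = pderiv i (Eop N q) := by
  rw [Eop_apply, Eop_apply, map_sum]
  apply Finset.sum_congr rfl
  intro j _
  rw [pderiv_comm' j i q, pderiv_comm' j i (pderiv j q)]

lemma E_pow_pderiv_comm (k : ℕ) (i : Fin N) (q : MvPolynomial (Fin N) ℂ) :
    (Eop N ^ k) (pderiv i q) = pderiv i ((Eop N ^ k) q) := by
  induction k with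
  | zero => rfl
  | succ k ih =>
    rw [pow_succ', Module.End.mul_apply, Module.End.mul_apply, ih, E_pderiv_comm]

lemma E_X (i : Fin N) (q : MvPolynomial (Fin N) ℂ) :
    Eop N (X i * q) = X i * Eop N q + (2 : ℂ) • pderiv i q := by
  classical
  rw [Eop_apply, Eop_apply]
  have hterm : ∀ j : Fin N, pderiv j (pderiv j (X i * q))
      = X i * pderiv j (pderiv j q) + (if j = i then (2 : ℂ) • pderiv i q else 0) := by
    intro j
    rcases eq_or_ne j i with rfl | hj
    · rw [if_pos rfl]
      rw [pderiv_mul, pderiv_X_self, one_mul, map_add, pderiv_mul, pderiv_X_self, one_mul]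
      rw [two_smul]
      ring
    · rw [if_neg hj]
      rw [pderiv_mul, pderiv_X_of_ne (Ne.symm hj), zero_mul, zero_add,
        pderiv_mul, pderiv_X_of_ne (Ne.symm hj), zero_mul, zero_add, add_zero]
  rw [Finset.sum_congr rfl fun j _ => hterm j, Finset.sum_add_distrib,
    Finset.sum_ite_eq' Finset.univ i (fun _ => (2 : ℂ) • pderiv i q),
    if_pos (Finset.mem_univ i), ← Finset.mul_sum]

lemma E_pow_X (k : ℕ) (i : Fin N) (q : MvPolynomial (Fin N) ℂ) :
    (Eop N ^ (k + 1)) (X i * q)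
      = X i * (Eop N ^ (k + 1)) q + ((2 : ℂ) * (k + 1)) • pderiv i ((Eop N ^ k) q) := by
  induction k with
  | zero =>
    simpa using E_X i q
  | succ k ih =>
    rw [pow_succ', Module.End.mul_apply, ih, map_add, map_smul, E_X,
      E_pderiv_comm, ← Module.End.mul_apply (Eop N) (Eop N ^ (k+1)), ← pow_succ']
    rw [add_assoc]
    congr 1
    have hE : (Eop N) ((Eop N ^ k) q) = (Eop N ^ (k + 1)) q := by
      rw [pow_succ', Module.End.mul_apply]
    rw [hE, ← add_smul]
    congr 1
    push_cast
    ring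

lemma gamma_step (c : ℂ) (k : ℕ) :
    (c ^ (k+1) * ((Nat.factorial (k+1) : ℂ))⁻¹) * ((2:ℂ) * ((k:ℂ)+1))
      = (2 * c) * (c ^ k * ((Nat.factorial k : ℂ))⁻¹) := by
  have hk : ((k:ℂ) + 1) ≠ 0 := Nat.cast_add_one_ne_zero k
  have hf : ((Nat.factorial k : ℂ)) ≠ 0 :=
    Nat.cast_ne_zero.mpr (Nat.factorial_pos k).ne'
  rw [Nat.factorial_succ]
  push_cast
  field_simp
  ring

lemma Uop_D (c : ℂ) (i : Fin N) (p : MvPolynomial (Fin N) ℂ) :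
    Uop N c (pderiv i p) = pderiv i (Uop N c p) := by
  have h1 : totalDegree (pderiv i p) < p.totalDegree + 1 := by
    rcases Nat.eq_zero_or_pos p.totalDegree with h0 | hpos
    · have := pderiv_eq_zero_of_deg_zero i (le_of_eq h0)
      rw [this]
      simp
    · have := deg_pderiv (q := p) (d := p.totalDegree - 1) i (by omega)
      omega
  rw [Uop_eq_PE c h1, Uop_eq_PE c (Nat.lt_succ_self p.totalDegree), PE_apply, PE_apply,
    map_sum]
  apply Finset.sum_congr rfl
  intro k _
  rw [Derivation.map_smul, E_pow_pderiv_comm]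

lemma Uop_X (c : ℂ) (i : Fin N) (p : MvPolynomial (Fin N) ℂ) :
    Uop N c (X i * p) = X i * Uop N c p + (2 * c) • pderiv i (Uop N c p) := by
  set d := p.totalDegree with hd
  have hXp : totalDegree (X i * p) < d + 2 := by
    have h := totalDegree_mul (X i) p
    rw [totalDegree_X] at h
    omega
  have hp1 : totalDegree p < d + 1 := Nat.lt_succ_self d
  rw [Uop_eq_PE c hXp, Uop_eq_PE c hp1]
  simp only [PE_apply]
  set γ : ℕ → ℂ := fun k => c ^ k * ((Nat.factorial k : ℂ))⁻¹ with hγ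
  set S : MvPolynomial (Fin N) ℂ
    := ∑ k ∈ Finset.range (d + 1), γ k • ((Eop N ^ k) p) with hS
  -- expand LHS
  rw [Finset.sum_range_succ' (fun k => γ k • ((Eop N ^ k) (X i * p))) (d + 1)]
  have hf0 : γ 0 • ((Eop N ^ 0) (X i * p)) = X i * p := by
    simp [hγ]
  rw [hf0]
  have hsummand : ∀ k, γ (k+1) • ((Eop N ^ (k+1)) (X i * p))
      = X i * (γ (k+1) • ((Eop N ^ (k+1)) p))
        + ((2*c) * γ k) • pderiv i ((Eop N ^ k) p) := by
    intro k
    rw [E_pow_X k i p, smul_add, mul_smul_comm, smul_smul]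
    congr 2
    rw [hγ]
    exact gamma_step c k
  rw [Finset.sum_congr rfl fun k _ => hsummand k, Finset.sum_add_distrib]
  -- now: (∑ X i * (γ(k+1)•E^(k+1)p) + ∑ (2c γ k)•pd(E^k p)) + X i * p
  --      = X i * S + (2c) • pderiv i S
  have hXpart : (∑ k ∈ Finset.range (d+1), X i * (γ (k+1) • ((Eop N ^ (k+1)) p)))
      + X i * p = X i * S := by
    rw [← Finset.mul_sum, ← mul_add]
    congr 1
    have e1 : ∑ k ∈ Finset.range (d+2), γ k • ((Eop N ^ k) p)
        = (∑ k ∈ Finset.range (d+1), γ (k+1) • ((Eop N ^ (k+1)) p))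
          + γ 0 • ((Eop N ^ 0) p) := Finset.sum_range_succ' _ _
    have e2 : γ 0 • ((Eop N ^ 0) p) = p := by simp [hγ]
    rw [e2] at e1
    rw [← e1]
    have hst := PE_stable (N := N) c (p := p) hp1 (Nat.le_succ (d+1))
    rw [PE_apply, PE_apply] at hst
    exact hst
  have hDpart : (∑ k ∈ Finset.range (d+1), ((2*c) * γ k) • pderiv i ((Eop N ^ k) p))
      = (2*c) • pderiv i S := by
    rw [hS, map_sum, Finset.smul_sum]
    apply Finset.sum_congr rfl
    intro k _
    rw [Derivation.map_smul, smul_smul]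
  rw [add_right_comm, hXpart, hDpart]

lemma Uop_const (c : ℂ) {p : MvPolynomial (Fin N) ℂ}
    (h : totalDegree p ≤ 0) : Uop N c p = p := by
  rw [Uop_eq_PE c (Nat.lt_succ_of_le h), PE_apply]
  simp

lemma Uop_tail (c : ℂ) {p : MvPolynomial (Fin N) ℂ} {d : ℕ}
    (h : totalDegree p ≤ d + 1) : totalDegree (Uop N c p - p) ≤ d := by
  rw [Uop_eq_PE c (show totalDegree p < d + 2 by omega), PE_apply,
    Finset.sum_range_succ' (fun k => (c ^ k * ((Nat.factorial k : ℂ))⁻¹) • ((Eop N ^ k) p))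
      (d + 1)]
  have e2 : (c ^ 0 * ((Nat.factorial 0 : ℂ))⁻¹) • ((Eop N ^ 0) p) = p := by simp
  rw [e2, add_sub_cancel_right]
  apply totalDegree_finsetSum_le
  intro k _
  refine (totalDegree_smul_le _ _).trans ?_
  have h1 : totalDegree ((Eop N) p) ≤ d := deg_E h
  have h2 : (Eop N ^ (k + 1)) p = (Eop N ^ k) ((Eop N) p) := by
    rw [pow_succ, Module.End.mul_apply]
  rw [h2]
  exact deg_E_pow k h1

lemma Uop_injective (c : ℂ) : Function.Injective (Uop N c) := by
  have key : ∀ (d : ℕ) (p : MvPolynomial (Fin N) ℂ),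
      totalDegree p ≤ d → Uop N c p = 0 → p = 0 := by
    intro d
    induction d with
    | zero =>
      intro p hp h0
      rwa [Uop_const c hp] at h0
    | succ d ih =>
      intro p hp h0
      have h1 : p = -(Uop N c p - p) := by rw [h0]; ring
      have h2 : totalDegree p ≤ d := by
        rw [h1, totalDegree_neg]
        exact Uop_tail c hp
      exact ih p h2 h0
  intro p q hpq
  have h : Uop N c (p - q) = 0 := by
    rw [map_sub, hpq, sub_self]
  have := key (totalDegree (p - q)) (p - q) le_rfl h
  exact sub_eq_zero.mp this

lemma Uop_surjective (c : ℂ) : Function.Surjective (Uop N c) := by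
  have key : ∀ (d : ℕ) (q : MvPolynomial (Fin N) ℂ),
      totalDegree q ≤ d → ∃ p, Uop N c p = q := by
    intro d
    induction d with
    | zero =>
      intro q hq
      exact ⟨q, Uop_const c hq⟩
    | succ d ih =>
      intro q hq
      have h2 : totalDegree (q - Uop N c q) ≤ d := by
        have : q - Uop N c q = -(Uop N c q - q) := by ring
        rw [this, totalDegree_neg]
        exact Uop_tail c hq
      obtain ⟨p', hp'⟩ := ih (q - Uop N c q) h2
      exact ⟨q + p', by rw [map_add, hp']; ring⟩
  intro q
  exact key (totalDegree q) q le_rfl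

/-- `exp (c E)` as a linear equivalence -/
noncomputable def Ueq (N : ℕ) (c : ℂ) :
    MvPolynomial (Fin N) ℂ ≃ₗ[ℂ] MvPolynomial (Fin N) ℂ :=
  LinearEquiv.ofBijective (Uop N c) ⟨Uop_injective c, Uop_surjective c⟩

lemma Ueq_apply (c : ℂ) (p : MvPolynomial (Fin N) ℂ) : Ueq N c p = Uop N c p := rfl

/-- the inverse operator -/
noncomputable def Vop (N : ℕ) (c : ℂ) : Module.End ℂ (MvPolynomial (Fin N) ℂ) :=
  ((Ueq N c).symm : MvPolynomial (Fin N) ℂ →ₗ[ℂ] MvPolynomial (Fin N) ℂ)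

lemma UV (c : ℂ) (p : MvPolynomial (Fin N) ℂ) : Uop N c (Vop N c p) = p :=
  (Ueq N c).apply_symm_apply p

lemma VU (c : ℂ) (p : MvPolynomial (Fin N) ℂ) : Vop N c (Uop N c p) = p :=
  (Ueq N c).symm_apply_apply p

/-- conjugation by `exp (c E)` -/
noncomputable def psi (N : ℕ) (c : ℂ)
    (T : Module.End ℂ (MvPolynomial (Fin N) ℂ)) :
    Module.End ℂ (MvPolynomial (Fin N) ℂ) :=
  Uop N c * T * Vop N c

lemma psi_apply (c : ℂ) (T : Module.End ℂ (MvPolynomial (Fin N) ℂ))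
    (p : MvPolynomial (Fin N) ℂ) :
    psi N c T p = Uop N c (T (Vop N c p)) := rfl

lemma psi_mul (c : ℂ) (S T : Module.End ℂ (MvPolynomial (Fin N) ℂ)) :
    psi N c (S * T) = psi N c S * psi N c T := by
  apply LinearMap.ext
  intro p
  simp only [psi_apply, Module.End.mul_apply]
  rw [VU]

lemma psi_one (c : ℂ) : psi N c 1 = 1 := by
  apply LinearMap.ext
  intro p
  simp only [psi_apply, Module.End.one_apply]
  rw [UV]

lemma psi_add (c : ℂ) (S T : Module.End ℂ (MvPolynomial (Fin N) ℂ)) :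
    psi N c (S + T) = psi N c S + psi N c T := by
  apply LinearMap.ext
  intro p
  simp only [psi_apply, LinearMap.add_apply, map_add]

lemma psi_smul (c : ℂ) (a : ℂ) (T : Module.End ℂ (MvPolynomial (Fin N) ℂ)) :
    psi N c (a • T) = a • psi N c T := by
  apply LinearMap.ext
  intro p
  simp only [psi_apply, LinearMap.smul_apply, map_smul]

lemma psi_X (c : ℂ) (i : Fin N) :
    psi N c (Xop N i) = Xop N i + (2 * c) • Dop N i := by
  apply LinearMap.ext
  intro p
  rw [psi_apply]
  have h1 : (Xop N i) (Vop N c p) = X i * Vop N c p := rfl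
  rw [h1, Uop_X, UV]
  rfl

lemma psi_D (c : ℂ) (i : Fin N) :
    psi N c (Dop N i) = Dop N i := by
  apply LinearMap.ext
  intro p
  rw [psi_apply]
  have h1 : (Dop N i) (Vop N c p) = pderiv i (Vop N c p) := rfl
  rw [h1, Uop_D, UV]
  rfl

lemma psi_mem (c : ℂ) {T : Module.End ℂ (MvPolynomial (Fin N) ℂ)}
    (hT : T ∈ Weyl N) : psi N c T ∈ Weyl N := by
  induction hT using Algebra.adjoin_induction with
  | mem x hx =>
    rcases hx with ⟨i, rfl⟩ | ⟨i, rfl⟩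
    · rw [psi_X]
      exact add_mem (XW N i).2 (Subalgebra.smul_mem _ (DW N i).2 _)
    · rw [psi_D]
      exact (DW N i).2
  | algebraMap r =>
    have h : (algebraMap ℂ (Module.End ℂ (MvPolynomial (Fin N) ℂ)) r) = r • 1 :=
      Algebra.algebraMap_eq_smul_one r
    rw [h, psi_smul, psi_one]
    exact Subalgebra.smul_mem _ (one_mem _) _
  | add x y hx hy ihx ihy =>
    rw [psi_add]; exact add_mem ihx ihy
  | mul x y hx hy ihx ihy =>
    rw [psi_mul]; exact mul_mem ihx ihy

/-- conjugation by `exp (c E)` restricted to the Weyl algebra -/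
noncomputable def phiW (c : ℂ) (T : Weyl N) : Weyl N :=
  ⟨psi N c T.1, psi_mem c T.2⟩

lemma phiW_mul (c : ℂ) (S T : Weyl N) : phiW c (S * T) = phiW c S * phiW c T :=
  Subtype.ext (psi_mul c S.1 T.1)

lemma phiW_add (c : ℂ) (S T : Weyl N) : phiW c (S + T) = phiW c S + phiW c T :=
  Subtype.ext (psi_add c S.1 T.1)

lemma phiW_smul (c : ℂ) (a : ℂ) (T : Weyl N) : phiW c (a • T) = a • phiW c T :=
  Subtype.ext (psi_smul c a T.1)

lemma phiW_one (c : ℂ) : phiW (N := N) c 1 = 1 :=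
  Subtype.ext (psi_one c)

lemma phiW_X (c : ℂ) (i : Fin N) :
    phiW c (XW N i) = XW N i + (2 * c) • DW N i :=
  Subtype.ext (psi_X c i)

lemma phiW_D (c : ℂ) (i : Fin N) :
    phiW c (DW N i) = DW N i :=
  Subtype.ext (psi_D c i)

lemma phiW_neg (c : ℂ) (T : Weyl N) : phiW c (-T) = - phiW c T := by
  apply Subtype.ext
  apply LinearMap.ext
  intro p
  show psi N c (-T.1) p = (-(psi N c T.1)) p
  simp only [psi_apply, LinearMap.neg_apply, map_neg]

noncomputable def Ffun (N : ℕ) : Weyl N → Weyl N := fun T =>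
  phiW (-(1/2)) (adjW (phiW (1/2) (adjW (phiW (-(1/2)) T))))

lemma hc1 : (2 * (-(1/2) : ℂ)) = -1 := by norm_num
lemma hc2 : (2 * ((1/2) : ℂ)) = 1 := by norm_num

lemma phi1_X (i : Fin N) : phiW (-(1/2)) (XW N i) = XW N i - DW N i := by
  rw [phiW_X, hc1, neg_one_smul ℂ (DW N i), ← sub_eq_add_neg]

lemma phi2_X (i : Fin N) : phiW (1/2) (XW N i) = XW N i + DW N i := by
  rw [phiW_X, hc2, one_smul]

lemma Ffun_X (i : Fin N) : Ffun N (XW N i) = - DW N i := by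
  show phiW (-(1/2)) (adjW (phiW (1/2) (adjW (phiW (-(1/2)) (XW N i))))) = - DW N i
  rw [phi1_X]
  have s2 : adjW (XW N i - DW N i) = DW N i - XW N i := by
    rw [sub_eq_add_neg (XW N i) (DW N i), adj_add, adj_neg, adj_XW, adj_DW,
      ← sub_eq_add_neg (DW N i) (XW N i)]
  rw [s2]
  have s3 : phiW (N := N) (1/2) (DW N i - XW N i) = - XW N i := by
    rw [sub_eq_add_neg (DW N i) (XW N i), phiW_add, phiW_D, phiW_neg, phi2_X]
    abel
  rw [s3]
  have s4 : adjW (- XW N i) = - DW N i := by rw [adj_neg, adj_XW]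
  rw [s4, phiW_neg, phiW_D]

lemma Ffun_D (i : Fin N) : Ffun N (DW N i) = XW N i := by
  show phiW (-(1/2)) (adjW (phiW (1/2) (adjW (phiW (-(1/2)) (DW N i))))) = XW N i
  rw [phiW_D, adj_DW, phi2_X]
  have s4 : adjW (XW N i + DW N i) = DW N i + XW N i := by
    rw [adj_add, adj_XW, adj_DW, add_comm]
  rw [s4, phiW_add, phiW_D, phi1_X]
  abel

lemma Ffun_add (S T : Weyl N) : Ffun N (S + T) = Ffun N S + Ffun N T := by
  show phiW _ (adjW (phiW _ (adjW (phiW _ (S + T))))) = _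
  rw [phiW_add, adj_add, phiW_add, adj_add, phiW_add]
  rfl

lemma Ffun_mul (S T : Weyl N) : Ffun N (S * T) = Ffun N S * Ffun N T := by
  show phiW _ (adjW (phiW _ (adjW (phiW _ (S * T))))) = _
  rw [phiW_mul, adj_mul, phiW_mul, adj_mul, phiW_mul]
  rfl

lemma Ffun_one : Ffun N (1 : Weyl N) = 1 := by
  show phiW _ (adjW (phiW _ (adjW (phiW _ (1 : Weyl N))))) = 1
  rw [phiW_one, adj_one, phiW_one, adj_one, phiW_one]

lemma Ffun_smul (a : ℂ) (T : Weyl N) : Ffun N (a • T) = a • Ffun N T := by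
  show phiW _ (adjW (phiW _ (adjW (phiW _ (a • T))))) = _
  rw [phiW_smul, adj_smul, phiW_smul, adj_smul, phiW_smul]
  rfl

/-- the Fourier transform as an algebra endomorphism of the Weyl algebra -/
noncomputable def Fhom (N : ℕ) : Weyl N →ₐ[ℂ] Weyl N where
  toFun := Ffun N
  map_one' := Ffun_one
  map_mul' := Ffun_mul
  map_zero' := by
    have h := Ffun_smul (N := N) 0 0
    simpa using h
  map_add' := Ffun_add
  commutes' := fun r => by
    show Ffun N (algebraMap ℂ (Weyl N) r) = algebraMap ℂ (Weyl N) r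
    rw [Algebra.algebraMap_eq_smul_one, Ffun_smul, Ffun_one]

lemma Fhom_X (i : Fin N) : Fhom N (XW N i) = - DW N i := Ffun_X i
lemma Fhom_D (i : Fin N) : Fhom N (DW N i) = XW N i := Ffun_D i

lemma hom_ext {F G : Weyl N →ₐ[ℂ] Weyl N}
    (hX : ∀ i, F (XW N i) = G (XW N i)) (hD : ∀ i, F (DW N i) = G (DW N i)) :
    F = G := by
  have key : ∀ (y) (hy : y ∈ Weyl N), F ⟨y, hy⟩ = G ⟨y, hy⟩ := by
    intro y hy
    induction hy using Algebra.adjoin_induction with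
    | mem x hx =>
      rcases hx with ⟨i, rfl⟩ | ⟨i, rfl⟩
      · exact hX i
      · exact hD i
    | algebraMap r =>
      show F (algebraMap ℂ (Weyl N) r) = G (algebraMap ℂ (Weyl N) r)
      rw [AlgHom.commutes, AlgHom.commutes]
    | add x y hx hy ihx ihy =>
      show F (⟨x, hx⟩ + ⟨y, hy⟩) = G (⟨x, hx⟩ + ⟨y, hy⟩)
      rw [map_add, map_add, ihx, ihy]
    | mul x y hx hy ihx ihy =>
      show F (⟨x, hx⟩ * ⟨y, hy⟩) = G (⟨x, hx⟩ * ⟨y, hy⟩)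
      rw [map_mul, map_mul, ihx, ihy]
  apply AlgHom.ext
  rintro ⟨y, hy⟩
  exact key y hy

end FourierAux

/-- There is a unique ℂ-algebra homomorphism `F : A_N → A_N` with `F(X_i) = -D_i` and
`F(D_i) = X_i` for all `i`, and this `F` is bijective (a ℂ-algebra automorphism): the
Fourier transform of algebraic D-modules on `ℂ^N`. -/
theorem fourier_exists_unique_and_bijective (N : ℕ) (hN : 0 < N) :
    (∃! F : Weyl N →ₐ[ℂ] Weyl N,
        ∀ i : Fin N, F (XW N i) = - DW N i ∧ F (DW N i) = XW N i) ∧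
    (∀ F : Weyl N →ₐ[ℂ] Weyl N,
        (∀ i : Fin N, F (XW N i) = - DW N i ∧ F (DW N i) = XW N i) →
        Function.Bijective F) := by
  constructor
  · refine ⟨FourierAux.Fhom N, fun i => ⟨FourierAux.Fhom_X i, FourierAux.Fhom_D i⟩, ?_⟩
    intro G hG
    exact FourierAux.hom_ext
      (fun i => (hG i).1.trans (FourierAux.Fhom_X i).symm)
      (fun i => (hG i).2.trans (FourierAux.Fhom_D i).symm)
  · intro F hF
    have h4 : ∀ x, F (F (F (F x))) = x := by
      have hid : ((F.comp F).comp (F.comp F)) = AlgHom.id ℂ (Weyl N) := by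
        apply FourierAux.hom_ext
        · intro i
          show F (F (F (F (XW N i)))) = XW N i
          have e1 := (hF i).1
          have e2 := (hF i).2
          have e3 : F (-(DW N i)) = - XW N i := by
            have hm := map_neg F (DW N i); rw [hm, e2]
          have e4 : F (- XW N i) = DW N i := by
            have hm := map_neg F (XW N i); rw [hm, e1, neg_neg (DW N i)]
          rw [e1, e3, e4, e2]
        · intro i
          show F (F (F (F (DW N i)))) = DW N i
          have e1 := (hF i).1
          have e2 := (hF i).2
          have e3 : F (-(DW N i)) = - XW N i := by
            have hm := map_neg F (DW N i); rw [hm, e2]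
          have e4 : F (- XW N i) = DW N i := by
            have hm := map_neg F (XW N i); rw [hm, e1, neg_neg (DW N i)]
          rw [e2, e1, e3, e4]
      intro x
      exact AlgHom.congr_fun hid x
    constructor
    · intro a b hab
      have ha := (h4 a).symm
      rw [hab] at ha
      rw [ha, h4 b]
    · intro y
      exact ⟨F (F (F y)), h4 y⟩
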